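/- arXiv:1010.4750 — 2 statements merged into one kernel-verified Lean document; each statement's English description precedes it below -/
import Mathlib

section
/- For every positive integer k and every integral quadratic form Q, the element X_k divides Σ_{j=0}^{k} (-1)^j·binomq(k,j)·q^{Q(j) + j(j-1)/2} in the Laurent polynomial ring ℤ[q^{±1}]. -/
open LaurentPolynomial

noncomputable section

/-- `ℤ[q^{±1}]`, the ring of Laurent polynomials in `q` over `ℤ`. -/
abbrev Rq := LaurentPolynomial ℤ

/-- The field `ℚ(q)` of rational functions in `q` over `ℚ`. -/
abbrev Kq := RatFunc ℚ

/-- The variable `q` viewed inside `ℚ(q)`. -/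
def qK : Kq := RatFunc.X

/-- The canonical embedding of `ℤ[q^{±1}]` into `ℚ(q)`, sending `q^i ↦ q^i`. -/
def mapRq (f : Rq) : Kq := Finsupp.sum f.coeff fun i c => (c : Kq) * qK ^ i

/-- `X_k = ∏_{j=⌊k/2⌋+1}^{k} (1 - q^j)` as an element of `ℤ[q^{±1}]`. -/
def Xk (k : ℕ) : Rq := ∏ j ∈ Finset.Icc (k / 2 + 1) k, (1 - T (j : ℤ))

/-- The Gaussian binomial coefficient `binomq(m,n) = (q^{m-n+1};q)_n / (q;q)_n`,
viewed inside `ℚ(q)` (it actually lies in `ℤ[q^{±1}]`). -/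
def binomK (m : ℤ) (n : ℕ) : Kq :=
  (∏ i ∈ Finset.range n, (1 - qK ^ (m - (n : ℤ) + 1 + (i : ℤ)))) /
    (∏ i ∈ Finset.range n, (1 - qK ^ (i + 1)))

/-- An integral quadratic form `Q(n) = a₂ n² + a₁ n + a₀`. -/
def IsIntegralQuadraticForm (Q : ℤ → ℤ) : Prop :=
  ∃ a₂ a₁ a₀ : ℤ, ∀ n : ℤ, Q n = a₂ * n ^ 2 + a₁ * n + a₀


-- ### coefficient helpers
lemma coeff_one_zero : (1 : Rq).coeff 0 = 1 := by
  rw [AddMonoidAlgebra.one_def]; exact Finsupp.single_eq_same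

lemma coeff_T (n a : ℤ) : (T n : Rq).coeff a = if n = a then 1 else 0 := by
  show (Finsupp.single n 1 : ℤ →₀ ℤ) a = _
  rw [Finsupp.single_apply]

lemma one_sub_T_ne_zero {n : ℤ} (hn : n ≠ 0) : (1 - T n : Rq) ≠ 0 := by
  intro h
  have h0 : (1 - T n : Rq).coeff 0 = 1 := by
    rw [AddMonoidAlgebra.coeff_sub, Finsupp.sub_apply, coeff_one_zero, coeff_T]
    simp [hn]
  rw [h] at h0
  simp at h0

lemma two_mul_cancel {x y : Rq} (h : 2 * x = 2 * y) : x = y := by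
  have h' : ∀ a : ℤ, x.coeff a = y.coeff a := by
    intro a
    have := congrArg (fun z : Rq => z.coeff a) h
    simp only [two_mul, AddMonoidAlgebra.coeff_add] at this
    rw [Finsupp.add_apply, Finsupp.add_apply] at this
    omega
  exact AddMonoidAlgebra.coeff_injective (Finsupp.ext h')

lemma add_self_zero {x : Rq} (h : x + x = 0) : x = 0 := by
  have h2 : 2 * x = 2 * 0 := by rw [two_mul, h, mul_zero]
  exact two_mul_cancel h2

-- ### Gaussian binomials
def gb : ℕ → ℕ → Rq
  | _, 0 => 1
  | 0, _+1 => 0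
  | k+1, j+1 => gb k j + T ((j : ℤ)+1) * gb k (j+1)

lemma gb_zero_right (k : ℕ) : gb k 0 = 1 := by cases k <;> rfl

lemma gb_big : ∀ k j : ℕ, k < j → gb k j = 0 := by
  intro k
  induction k with
  | zero => intro j hj; cases j with
    | zero => omega
    | succ i => rfl
  | succ K ih =>
    intro j hj
    cases j with
    | zero => omega
    | succ i =>
      show gb K i + T ((i:ℤ)+1) * gb K (i+1) = 0
      rw [ih i (by omega), ih (i+1) (by omega)]
      ring

def DD (j : ℕ) : Rq := ∏ i ∈ Finset.range j, (1 - T ((i : ℤ) + 1))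

def NN (k j : ℕ) : Rq := ∏ i ∈ Finset.range j, (1 - T ((k : ℤ) - (j : ℤ) + 1 + (i : ℤ)))

lemma DD_zero : DD 0 = 1 := Finset.prod_range_zero _
lemma NN_zero (k : ℕ) : NN k 0 = 1 := Finset.prod_range_zero _

lemma DD_succ (i : ℕ) : DD (i+1) = DD i * (1 - T ((i:ℤ)+1)) := Finset.prod_range_succ _ _

lemma DD_ne_zero (j : ℕ) : DD j ≠ 0 := by
  rw [DD]
  rw [Finset.prod_ne_zero_iff]
  intro i _
  exact one_sub_T_ne_zero (by omega)

lemma NN_top (K i : ℕ) : NN (K+1) (i+1) = NN K i * (1 - T ((K:ℤ)+1)) := by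
  rw [NN, NN]
  have he : ∀ l : ℕ, ((K+1:ℕ):ℤ) - ((i+1:ℕ):ℤ) + 1 + (l:ℤ) = (K:ℤ) - (i:ℤ) + 1 + (l:ℤ) := by
    intro l; push_cast; ring
  simp only [he]
  rw [Finset.prod_range_succ]
  congr 2
  ring

lemma NN_bot (K i : ℕ) : NN K (i+1) = NN K i * (1 - T ((K:ℤ) - (i:ℤ))) := by
  rw [NN, NN]
  have he : ∀ l : ℕ, ((K:ℕ):ℤ) - ((i+1:ℕ):ℤ) + 1 + (l:ℤ) = (K:ℤ) - (i:ℤ) + (l:ℤ) := by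
    intro l; push_cast; ring
  simp only [he]
  rw [Finset.prod_range_succ']
  congr 1
  · apply Finset.prod_congr rfl
    intro l _
    congr 1
    push_cast
    ring
  · congr 1
    push_cast
    ring

lemma PI : ∀ k j : ℕ, j ≤ k → gb k j * DD j = NN k j := by
  intro k
  induction k with
  | zero =>
    intro j hj
    have : j = 0 := by omega
    subst this
    rw [gb_zero_right, DD_zero, NN_zero, one_mul]
  | succ K ih =>
    intro j hj
    cases j with
    | zero => rw [gb_zero_right, DD_zero, NN_zero, one_mul]
    | succ i =>
      have hiK : i ≤ K := by omega
      show (gb K i + T ((i:ℤ)+1) * gb K (i+1)) * DD (i+1) = NN (K+1) (i+1)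
      rw [DD_succ, NN_top]
      rcases Nat.lt_or_ge K (i+1) with hc | hc
      · -- i = K
        have : i = K := by omega
        subst this
        rw [gb_big i (i+1) (by omega)]
        rw [← ih i le_rfl]
        ring
      · -- i+1 ≤ K
        have h1 := ih i hiK
        have h2 := ih (i+1) hc
        have hTT : (T ((i:ℤ)+1) : Rq) * T ((K:ℤ)-(i:ℤ)) = T ((K:ℤ)+1) := by
          have he : (i:ℤ)+1 + ((K:ℤ)-(i:ℤ)) = (K:ℤ)+1 := by ring
          rw [← T_add, he]
        calc (gb K i + T ((i:ℤ)+1) * gb K (i+1)) * (DD i * (1 - T ((i:ℤ)+1)))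
            = (gb K i * DD i) * (1 - T ((i:ℤ)+1))
              + T ((i:ℤ)+1) * ((gb K (i+1) * DD (i+1)) * 1) := by rw [DD_succ]; ring
          _ = NN K i * (1 - T ((i:ℤ)+1)) + T ((i:ℤ)+1) * (NN K i * (1 - T ((K:ℤ)-(i:ℤ)))) := by
              rw [h1, h2, NN_bot]; ring
          _ = NN K i * (1 - T ((i:ℤ)+1) * T ((K:ℤ)-(i:ℤ))) := by ring
          _ = NN K i * (1 - T ((K:ℤ)+1)) := by rw [hTT]

lemma gb_self (k : ℕ) : gb k k = 1 := by
  have h := PI k k le_rfl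
  have hN : NN k k = DD k := by
    rw [NN, DD]
    apply Finset.prod_congr rfl
    intro i _
    congr 2
    ring
  rw [hN] at h
  have := mul_right_cancel₀ (DD_ne_zero k) (h.trans (one_mul (DD k)).symm)
  exact this

-- symmetry
lemma gb_symm {k j : ℕ} (hj : j ≤ k) : gb k j = gb k (k - j) := by
  have key : ∀ j' : ℕ, j' ≤ k → DD (k - j') * NN k j' = DD k := by
    intro j' hj'
    rw [DD, DD, NN]
    have hsplit := Finset.prod_range_add (fun i => (1 - T ((i:ℤ)+1) : Rq)) (k - j') j'
    rw [Nat.sub_add_cancel hj'] at hsplit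
    rw [hsplit]
    congr 1
    apply Finset.prod_congr rfl
    intro l _
    congr 2
    omega
  have h1 := PI k j hj
  have h2 := PI k (k - j) (Nat.sub_le k j)
  have e1 := key j hj
  have e2 := key (k - j) (Nat.sub_le k j)
  rw [Nat.sub_sub_self hj] at e2
  have : gb k j * (DD j * DD (k - j)) = gb k (k - j) * (DD j * DD (k - j)) := by
    calc gb k j * (DD j * DD (k-j)) = DD (k-j) * (gb k j * DD j) := by ring
      _ = DD (k-j) * NN k j := by rw [h1]
      _ = DD k := e1
      _ = DD j * NN k (k-j) := e2.symm
      _ = DD j * (gb k (k-j) * DD (k-j)) := by rw [h2]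
      _ = gb k (k-j) * (DD j * DD (k-j)) := by ring
  exact mul_right_cancel₀ (mul_ne_zero (DD_ne_zero j) (DD_ne_zero (k-j))) this

-- (1 - q^{i+1}) * gb (K+1) (i+1) = (1 - q^{K+1}) * gb K i
lemma gb_mul_form {K i : ℕ} (hi : i ≤ K) :
    (1 - T ((i:ℤ)+1)) * gb (K+1) (i+1) = (1 - T ((K:ℤ)+1)) * gb K i := by
  have h1 := PI (K+1) (i+1) (by omega)
  have h2 := PI K i hi
  apply mul_right_cancel₀ (DD_ne_zero i)
  calc (1 - T ((i:ℤ)+1)) * gb (K+1) (i+1) * DD i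
      = gb (K+1) (i+1) * DD (i+1) := by rw [DD_succ]; ring
    _ = NN (K+1) (i+1) := h1
    _ = NN K i * (1 - T ((K:ℤ)+1)) := NN_top K i
    _ = (1 - T ((K:ℤ)+1)) * gb K i * DD i := by rw [← h2]; ring

-- Pascal (q^{k-j} form): gb (K+1) (i+1) = gb K (i+1) + q^{K-i} gb K i
lemma gb_pascal' {K i : ℕ} (hi : i ≤ K) :
    gb (K+1) (i+1) = gb K (i+1) + T ((K:ℤ) - (i:ℤ)) * gb K i := by
  apply mul_right_cancel₀ (DD_ne_zero (i+1))
  have hL : gb (K+1) (i+1) * DD (i+1) = NN K i * (1 - T ((K:ℤ)+1)) := by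
    rw [PI (K+1) (i+1) (by omega), NN_top]
  rcases Nat.lt_or_ge K (i+1) with hc | hc
  · have : i = K := by omega
    subst this
    rw [hL, gb_big i (i+1) (by omega)]
    have : (i:ℤ) - (i:ℤ) = 0 := by ring
    rw [this, T_zero]
    rw [DD_succ, ← PI i i le_rfl]
    rw [gb_self]
    ring
  · rw [hL]
    rw [add_mul, DD_succ]
    have h2 : gb K (i+1) * (DD i * (1 - T ((i:ℤ)+1))) = NN K i * (1 - T ((K:ℤ)-(i:ℤ))) := by
      rw [← DD_succ, PI K (i+1) hc, NN_bot]
    rw [h2]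
    have h3 : T ((K:ℤ)-(i:ℤ)) * gb K i * (DD i * (1 - T ((i:ℤ)+1)))
        = T ((K:ℤ)-(i:ℤ)) * (1 - T ((i:ℤ)+1)) * NN K i := by
      rw [← PI K i hi]; ring
    rw [h3]
    have hTT : (T ((K:ℤ)-(i:ℤ)) : Rq) * T ((i:ℤ)+1) = T ((K:ℤ)+1) := by
      have he : (K:ℤ)-(i:ℤ) + ((i:ℤ)+1) = (K:ℤ)+1 := by ring
      rw [← T_add, he]
    calc NN K i * (1 - T ((K:ℤ)+1))
        = NN K i * (1 - T ((K:ℤ)-(i:ℤ)) * T ((i:ℤ)+1)) := by rw [hTT]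
      _ = NN K i * (1 - T ((K:ℤ)-(i:ℤ))) + T ((K:ℤ)-(i:ℤ)) * (1 - T ((i:ℤ)+1)) * NN K i := by
          ring

-- c2 j = j(j-1)/2 as integer
def c2 (j : ℕ) : ℤ := ((j * (j - 1) / 2 : ℕ) : ℤ)

lemma two_c2 (n : ℕ) : 2 * c2 n = (n : ℤ) * ((n : ℤ) - 1) := by
  rw [c2]
  cases n with
  | zero => simp
  | succ s =>
    rw [Nat.add_sub_cancel]
    have hdvd : 2 ∣ (s+1) * s := by
      have := Nat.even_mul_succ_self s
      rw [mul_comm (s+1) s]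
      exact even_iff_two_dvd.mp this
    have hc : (s+1) * s / 2 * 2 = (s+1) * s := Nat.div_mul_cancel hdvd
    have hcast := congrArg (fun x : ℕ => (x : ℤ)) hc
    push_cast at hcast
    push_cast
    linarith

lemma c2_zero : c2 0 = 0 := by rfl

lemma c2_succ (j : ℕ) : c2 (j+1) = c2 j + j := by
  have h1 := two_c2 (j+1)
  have h2 := two_c2 j
  push_cast at h1
  have : ((j:ℤ)+1) * ((j:ℤ)+1-1) = (j:ℤ)*((j:ℤ)-1) + 2*(j:ℤ) := by ring
  linarith

-- the main sum
def TT (k : ℕ) (A B : ℤ) : Rq :=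
  ∑ j ∈ Finset.range (k+1), ((-1 : Rq))^j * gb k j * T (A * c2 j + B * (j : ℤ))

lemma TT_zero (A B : ℤ) : TT 0 A B = 1 := by
  rw [TT]
  simp [gb_zero_right, c2_zero]

-- L1 : B-step recurrence
lemma TT_step (K : ℕ) (A B : ℤ) :
    TT (K+1) A (B+1) - TT (K+1) A B
      = T B * (1 - T ((K:ℤ)+1)) * TT K A (A+B) := by
  rw [TT, TT, ← Finset.sum_sub_distrib]
  rw [Finset.sum_range_succ']
  have h0 : ((-1:Rq))^0 * gb (K+1) 0 * T (A * c2 0 + (B+1) * ((0:ℕ):ℤ))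
      - ((-1:Rq))^0 * gb (K+1) 0 * T (A * c2 0 + B * ((0:ℕ):ℤ)) = 0 := by
    simp [c2_zero]
  rw [h0, add_zero]
  rw [TT, Finset.mul_sum]
  apply Finset.sum_congr rfl
  intro i hi
  have hiK : i ≤ K := by
    have := Finset.mem_range.mp hi; omega
  have hx1 : A * c2 (i+1) + (B+1) * ((i+1 : ℕ) : ℤ)
      = (A * c2 (i+1) + B * ((i+1:ℕ) : ℤ)) + ((i:ℤ)+1) := by push_cast; ring
  have hsub : (T (A * c2 (i+1) + (B+1) * ((i+1:ℕ) : ℤ)) : Rq)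
      - T (A * c2 (i+1) + B * ((i+1:ℕ):ℤ))
      = -(T (A * c2 (i+1) + B * ((i+1:ℕ):ℤ)) * (1 - T ((i:ℤ)+1))) := by
    rw [hx1, T_add]
    ring
  have hexp : A * c2 (i+1) + B * ((i+1:ℕ):ℤ) = B + (A * c2 i + (A+B) * (i:ℤ)) := by
    rw [c2_succ]; push_cast; ring
  calc ((-1:Rq))^(i+1) * gb (K+1) (i+1) * T (A * c2 (i+1) + (B+1) * ((i+1:ℕ):ℤ))
        - ((-1:Rq))^(i+1) * gb (K+1) (i+1) * T (A * c2 (i+1) + B * ((i+1:ℕ):ℤ))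
      = ((-1:Rq))^(i+1) * gb (K+1) (i+1)
          * ((T (A * c2 (i+1) + (B+1) * ((i+1:ℕ):ℤ)) : Rq) - T (A * c2 (i+1) + B * ((i+1:ℕ):ℤ))) := by
        ring
    _ = ((-1:Rq))^i * ((1 - T ((i:ℤ)+1)) * gb (K+1) (i+1)) * T (A * c2 (i+1) + B * ((i+1:ℕ):ℤ)) := by
        rw [hsub]; rw [pow_succ]; ring
    _ = ((-1:Rq))^i * ((1 - T ((K:ℤ)+1)) * gb K i) * (T B * T (A * c2 i + (A+B) * (i:ℤ))) := by
        have hTB : (T (B + (A * c2 i + (A+B) * (i:ℤ))) : Rq) = T B * T (A * c2 i + (A+B) * (i:ℤ)) := T_add _ _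
        rw [gb_mul_form hiK, hexp, hTB]
    _ = T B * (1 - T ((K:ℤ)+1)) * (((-1:Rq))^i * gb K i * T (A * c2 i + (A+B) * (i:ℤ))) := by
        ring

-- L2 : k-step recurrence
lemma TT_rec (K : ℕ) (A B : ℤ) :
    TT (K+1) A B = TT K A B - T ((K:ℤ) + B) * TT K A (A+B-1) := by
  have hTTK : TT K A B
      = ∑ i ∈ Finset.range K, ((-1:Rq))^(i+1) * gb K (i+1) * T (A * c2 (i+1) + B * ((i+1:ℕ):ℤ)) + 1 := by
    rw [TT, Finset.sum_range_succ']
    congr 1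
    simp [gb_zero_right, c2_zero]
  rw [TT, Finset.sum_range_succ']
  have h0 : ((-1:Rq))^0 * gb (K+1) 0 * T (A * c2 0 + B * ((0:ℕ):ℤ)) = 1 := by
    simp [gb_zero_right, c2_zero]
  rw [h0]
  have hterm : ∀ i ∈ Finset.range (K+1),
      ((-1:Rq))^(i+1) * gb (K+1) (i+1) * T (A * c2 (i+1) + B * ((i+1:ℕ):ℤ))
      = ((-1:Rq))^(i+1) * gb K (i+1) * T (A * c2 (i+1) + B * ((i+1:ℕ):ℤ))
        + (-(T ((K:ℤ)+B))) * (((-1:Rq))^i * gb K i * T (A * c2 i + (A+B-1) * (i:ℤ))) := by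
    intro i hi
    have hiK : i ≤ K := by have := Finset.mem_range.mp hi; omega
    rw [gb_pascal' hiK]
    have hexp : (K:ℤ) - (i:ℤ) + (A * c2 (i+1) + B * ((i+1:ℕ):ℤ))
        = ((K:ℤ)+B) + (A * c2 i + (A+B-1) * (i:ℤ)) := by
      rw [c2_succ]; push_cast; ring
    have hT : (T ((K:ℤ)-(i:ℤ)) : Rq) * T (A * c2 (i+1) + B * ((i+1:ℕ):ℤ))
        = T ((K:ℤ)+B) * T (A * c2 i + (A+B-1) * (i:ℤ)) := by
      rw [← T_add, ← T_add, hexp]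
    calc ((-1:Rq))^(i+1) * (gb K (i+1) + T ((K:ℤ)-(i:ℤ)) * gb K i) * T (A * c2 (i+1) + B * ((i+1:ℕ):ℤ))
        = ((-1:Rq))^(i+1) * gb K (i+1) * T (A * c2 (i+1) + B * ((i+1:ℕ):ℤ))
          + ((-1:Rq))^(i+1) * gb K i * (T ((K:ℤ)-(i:ℤ)) * T (A * c2 (i+1) + B * ((i+1:ℕ):ℤ))) := by ring
      _ = ((-1:Rq))^(i+1) * gb K (i+1) * T (A * c2 (i+1) + B * ((i+1:ℕ):ℤ))
          + (-(T ((K:ℤ)+B))) * (((-1:Rq))^i * gb K i * T (A * c2 i + (A+B-1) * (i:ℤ))) := by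
        rw [hT, pow_succ]; ring
  rw [Finset.sum_congr rfl hterm, Finset.sum_add_distrib]
  have hs1 : ∑ i ∈ Finset.range (K+1),
      ((-1:Rq))^(i+1) * gb K (i+1) * T (A * c2 (i+1) + B * ((i+1:ℕ):ℤ))
      = ∑ i ∈ Finset.range K,
      ((-1:Rq))^(i+1) * gb K (i+1) * T (A * c2 (i+1) + B * ((i+1:ℕ):ℤ)) := by
    rw [Finset.sum_range_succ, gb_big K (K+1) (by omega)]
    simp
  rw [hs1, ← Finset.mul_sum, ← TT]
  rw [hTTK]
  ring

-- reflection c2 identity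
lemma c2_reflect {k j : ℕ} (hj : j ≤ k) :
    c2 (k - j) = c2 k + c2 j + (j:ℤ) - (k:ℤ) * (j:ℤ) := by
  have h1 := two_c2 (k - j)
  have h2 := two_c2 k
  have h3 := two_c2 j
  have hc : ((k - j : ℕ) : ℤ) = (k:ℤ) - (j:ℤ) := by omega
  rw [hc] at h1
  nlinarith [h1, h2, h3]

lemma neg_one_pow_sub {k j : ℕ} (hj : j ≤ k) :
    ((-1 : Rq))^(k - j) = ((-1:Rq))^k * ((-1:Rq))^j := by
  have h1 : ((-1:Rq))^(k-j) * ((-1:Rq))^j = ((-1:Rq))^k := by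
    rw [← pow_add, Nat.sub_add_cancel hj]
  have h2 : ((-1:Rq))^j * ((-1:Rq))^j = 1 := by
    rw [← pow_add]
    have : j + j = 2 * j := by ring
    rw [this, pow_mul]
    norm_num
  calc ((-1:Rq))^(k-j) = ((-1:Rq))^(k-j) * (((-1:Rq))^j * ((-1:Rq))^j) := by rw [h2, mul_one]
    _ = (((-1:Rq))^(k-j) * ((-1:Rq))^j) * ((-1:Rq))^j := by ring
    _ = ((-1:Rq))^k * ((-1:Rq))^j := by rw [h1]

-- L3 : reflection
lemma TT_reflect (k : ℕ) (A B : ℤ) :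
    TT k A B = ((-1:Rq))^k * T (A * c2 k + B * (k:ℤ)) * TT k A (-(A * ((k:ℤ)-1)) - B) := by
  rw [TT, TT, Finset.mul_sum]
  rw [← Finset.sum_range_reflect]
  apply Finset.sum_congr rfl
  intro j hj
  have hjk : j ≤ k := by have := Finset.mem_range.mp hj; omega
  have hidx : k + 1 - 1 - j = k - j := by omega
  rw [hidx]
  have hgb : gb k (k - j) = gb k j := (gb_symm hjk).symm
  have hcast : ((k - j : ℕ) : ℤ) = (k:ℤ) - (j:ℤ) := by omega
  have hexp : A * c2 (k-j) + B * ((k-j:ℕ):ℤ)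
      = (A * c2 k + B * (k:ℤ)) + (A * c2 j + (-(A * ((k:ℤ)-1)) - B) * (j:ℤ)) := by
    rw [c2_reflect hjk, hcast]
    ring
  rw [neg_one_pow_sub hjk, hgb, hexp, T_add]
  ring

-- L4 : odd case vanishing
lemma TT_odd_vanish (t : ℕ) (A : ℤ) : TT (2*t+1) A (-(A * (t:ℤ))) = 0 := by
  have h := TT_reflect (2*t+1) A (-(A * (t:ℤ)))
  have hB : -(A * (((2*t+1:ℕ):ℤ) - 1)) - (-(A * (t:ℤ))) = -(A * (t:ℤ)) := by
    push_cast; ring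
  rw [hB] at h
  have hE : A * c2 (2*t+1) + (-(A * (t:ℤ))) * ((2*t+1:ℕ):ℤ) = 0 := by
    have h2 := two_c2 (2*t+1)
    have hg2 : 2 * (A * c2 (2*t+1) + (-(A * (t:ℤ))) * ((2*t+1:ℕ):ℤ)) = 0 := by
      push_cast at h2 ⊢
      linear_combination A * h2
    linarith
  have hodd : ((-1:Rq))^(2*t+1) = -1 := by
    rw [pow_succ, pow_mul]
    norm_num
  rw [hodd, hE, T_zero] at h
  apply add_self_zero
  calc TT (2*t+1) A (-(A * (t:ℤ))) + TT (2*t+1) A (-(A * (t:ℤ)))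
      = (-1 * 1 * TT (2*t+1) A (-(A * (t:ℤ)))) + TT (2*t+1) A (-(A * (t:ℤ))) := by rw [← h]
    _ = 0 := by ring

-- ### Xk structure
lemma Xk_zero : Xk 0 = 1 := by
  rw [Xk]
  have : Finset.Icc (0/2+1) 0 = ∅ := by decide
  rw [this, Finset.prod_empty]

lemma Xk_odd (t : ℕ) : Xk (2*t+1) = Xk (2*t) * (1 - T ((2*t+1:ℕ):ℤ)) := by
  rw [Xk, Xk]
  have h1 : (2*t+1)/2 = t := by omega
  have h2 : (2*t)/2 = t := by omega
  rw [h1, h2]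
  exact Finset.prod_Icc_succ_top (by omega) _

def VV (m : ℕ) : Rq := ∏ j ∈ Finset.Icc (m+2) (2*m+1), (1 - T (j : ℤ))

lemma VV_ne_zero (m : ℕ) : VV m ≠ 0 := by
  rw [VV, Finset.prod_ne_zero_iff]
  intro j hj
  have := Finset.mem_Icc.mp hj
  exact one_sub_T_ne_zero (by omega)

lemma Xk_even_split (m : ℕ) : Xk (2*m+2) = VV m * (1 - T ((2*m+2:ℕ):ℤ)) := by
  rw [Xk, VV]
  have h1 : (2*m+2)/2 = m+1 := by omega
  rw [h1]
  have h2 : (2*m+2) = (2*m+1)+1 := by omega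
  rw [h2]
  exact Finset.prod_Icc_succ_top (by omega) _

lemma Xk_odd_split (m : ℕ) : Xk (2*m+1) = (1 - T ((m+1:ℕ):ℤ)) * VV m := by
  rw [Xk, VV]
  have h1 : (2*m+1)/2 = m := by omega
  rw [h1]
  have h2 : Finset.Icc (m+1) (2*m+1) = Finset.Ico (m+1) (2*m+2) := by
    rw [← Finset.Ico_add_one_right_eq_Icc]; rfl
  have h3 : Finset.Icc (m+2) (2*m+1) = Finset.Ico (m+2) (2*m+2) := by
    rw [← Finset.Ico_add_one_right_eq_Icc]; rfl
  rw [h2, h3]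
  exact Finset.prod_eq_prod_Ico_succ_bot (by omega) _

-- ### mod 2 reduction
abbrev L2 := LaurentPolynomial (ZMod 2)

def piF : Multiplicative ℤ →* L2 where
  toFun n := T n.toAdd
  map_one' := by show (T 0 : L2) = 1; exact T_zero
  map_mul' a b := by show (T (a.toAdd + b.toAdd) : L2) = _; exact T_add _ _

def piH : Rq →ₐ[ℤ] L2 := AddMonoidAlgebra.lift ℤ L2 ℤ piF

lemma piH_single (a : ℤ) (b : ℤ) :
    piH (AddMonoidAlgebra.single a b) = AddMonoidAlgebra.single a (b : ZMod 2) := by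
  show (AddMonoidAlgebra.lift ℤ L2 ℤ piF) _ = _
  rw [AddMonoidAlgebra.lift_single]
  show b • (T a : L2) = _
  rw [Algebra.smul_def, eq_intCast (algebraMap ℤ L2) b]
  rw [AddMonoidAlgebra.intCast_def]
  show AddMonoidAlgebra.single 0 _ * AddMonoidAlgebra.single a 1 = _
  rw [AddMonoidAlgebra.single_mul_single]
  rw [zero_add, mul_one]

lemma piH_coeff (f : Rq) (a : ℤ) : (piH f).coeff a = ((f.coeff a : ℤ) : ZMod 2) := by
  induction f using AddMonoidAlgebra.induction_linear with
  | zero => simp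
  | add f g hf hg =>
      rw [map_add]
      show (piH f + piH g).coeff a = _
      rw [AddMonoidAlgebra.coeff_add, Finsupp.add_apply]
      show _ = ((f + g).coeff a : ZMod 2)
      rw [AddMonoidAlgebra.coeff_add, Finsupp.add_apply, hf, hg]
      push_cast; ring
  | single a' b =>
      rw [piH_single]
      show Finsupp.single a' ((b : ZMod 2)) a = ((Finsupp.single a' b) a : ZMod 2)
      rw [Finsupp.single_apply, Finsupp.single_apply]
      split <;> simp

lemma piH_T (n : ℤ) : piH (T n) = T n := by
  show piH (AddMonoidAlgebra.single n 1) = _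
  rw [piH_single]
  rfl

lemma one_add_T_ne_zero_L2 {n : ℤ} (hn : n ≠ 0) : (1 + T n : L2) ≠ 0 := by
  intro h
  have h0 : (1 + T n : L2).coeff 0 = 1 := by
    rw [AddMonoidAlgebra.coeff_add, Finsupp.add_apply]
    have h1 : (1 : L2).coeff 0 = 1 := by
      rw [AddMonoidAlgebra.one_def]; exact Finsupp.single_eq_same
    have h2 : (T n : L2).coeff 0 = 0 := by
      show (Finsupp.single n 1 : ℤ →₀ ZMod 2) 0 = 0
      rw [Finsupp.single_apply]
      simp [hn]
    rw [h1, h2, add_zero]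
  rw [h] at h0
  simp at h0

lemma eq_two_mul_of_piH_zero {x : Rq} (h : piH x = 0) : ∃ u : Rq, x = 2 * u := by
  have hdvd : ∀ a : ℤ, (2:ℤ) ∣ (x.coeff a) := by
    intro a
    have := piH_coeff x a
    rw [h] at this
    have h0 : ((x.coeff a : ℤ) : ZMod 2) = 0 := by
      rw [← this]; rfl
    exact_mod_cast (ZMod.intCast_zmod_eq_zero_iff_dvd (x.coeff a) 2).mp h0
  refine ⟨AddMonoidAlgebra.ofCoeff (Finsupp.mapRange (fun c => c / 2) (by norm_num) x.coeff), ?_⟩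
  apply AddMonoidAlgebra.coeff_injective
  apply Finsupp.ext
  intro a
  rw [two_mul, AddMonoidAlgebra.coeff_add, Finsupp.add_apply, AddMonoidAlgebra.coeff_ofCoeff,
    Finsupp.mapRange_apply]
  obtain ⟨c, hc⟩ := hdvd a
  rw [hc]
  omega

-- ### evaluation into Kq
def qKu : Kqˣ := Units.mk0 qK RatFunc.X_ne_zero

def evF : Multiplicative ℤ →* Kq := (Units.coeHom Kq).comp (zpowersHom Kqˣ qKu)

def ev : Rq →ₐ[ℤ] Kq := AddMonoidAlgebra.lift ℤ Kq ℤ evF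

lemma evF_apply (n : ℤ) : evF (Multiplicative.ofAdd n) = qK ^ n := by
  show ((qKu ^ n : Kqˣ) : Kq) = qK ^ n
  rw [Units.val_zpow_eq_zpow_val]; rfl

lemma ev_T (n : ℤ) : ev (T n) = qK ^ n := by
  show (AddMonoidAlgebra.lift ℤ Kq ℤ evF) (AddMonoidAlgebra.single n 1) = qK ^ n
  rw [AddMonoidAlgebra.lift_single, evF_apply]
  rw [Algebra.smul_def, map_one, one_mul]

lemma mapRq_eq_ev (f : Rq) : mapRq f = ev f := by
  rw [mapRq]
  show _ = (AddMonoidAlgebra.lift ℤ Kq ℤ evF) f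
  rw [AddMonoidAlgebra.lift_apply]
  congr 1
  ext a b
  rw [evF_apply, Algebra.smul_def, eq_intCast (algebraMap ℤ Kq) b]

-- binomK = ev (gb k j)
lemma one_sub_qK_pow_ne_zero (n : ℕ) (hn : 1 ≤ n) : (1 - qK ^ (n:ℤ) : Kq) ≠ 0 := by
  have hpoly : (1 - Polynomial.X ^ n : Polynomial ℚ) ≠ 0 := by
    intro h
    have hc := congrArg (fun p => Polynomial.coeff p 0) h
    have hne : ¬ ((0:ℕ) = n) := by omega
    simp [Polynomial.coeff_X_pow, hne] at hc
  have : (1 - qK ^ (n:ℤ) : Kq) = algebraMap (Polynomial ℚ) Kq (1 - Polynomial.X ^ n) := by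
    rw [map_sub, map_one, map_pow, RatFunc.algebraMap_X]
    rw [zpow_natCast]
    rfl
  rw [this]
  intro h
  exact hpoly (RatFunc.algebraMap_injective ℚ (h.trans (map_zero _).symm))

lemma binomK_eq_ev_gb {k j : ℕ} (hj : j ≤ k) : binomK (k:ℤ) j = ev (gb k j) := by
  have hN : ev (NN k j) = ∏ i ∈ Finset.range j, (1 - qK ^ ((k:ℤ) - (j:ℤ) + 1 + (i:ℤ))) := by
    rw [NN, map_prod]
    apply Finset.prod_congr rfl
    intro i _
    rw [map_sub, map_one, ev_T]
  have hD : ev (DD j) = ∏ i ∈ Finset.range j, (1 - qK ^ (i + 1)) := by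
    rw [DD, map_prod]
    apply Finset.prod_congr rfl
    intro i _
    rw [map_sub, map_one, ev_T]
    rw [show ((i:ℤ)+1) = ((i+1 : ℕ) : ℤ) by push_cast; ring, zpow_natCast]
  have hDne : (∏ i ∈ Finset.range j, (1 - qK ^ (i + 1)) : Kq) ≠ 0 := by
    rw [Finset.prod_ne_zero_iff]
    intro i _
    have := one_sub_qK_pow_ne_zero (i+1) (by omega)
    rwa [zpow_natCast] at this
  have hPI := congrArg (fun z => ev z) (PI k j hj)
  simp only [map_mul] at hPI
  rw [hN, hD] at hPI
  rw [binomK, ← hPI]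
  rw [mul_div_assoc, div_self hDne, mul_one]

-- ### main divisibility theorem
theorem Xk_dvd_TT (k : ℕ) : ∀ (a B : ℤ), Xk k ∣ TT k (2*a+1) B := by
  induction k using Nat.strong_induction_on with
  | _ k ih =>
    intro a B
    rcases Nat.eq_zero_or_pos k with rfl | hk
    · rw [Xk_zero]; exact one_dvd _
    obtain ⟨K, rfl⟩ : ∃ K, k = K+1 := ⟨k-1, by omega⟩
    have hprev : ∀ B' : ℤ, Xk K ∣ TT K (2*a+1) B' := fun B' => ih K (by omega) a B'
    have hXstep : Xk (K+1) ∣ (1 - T ((K:ℤ)+1)) * Xk K := by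
      rcases Nat.even_or_odd K with heK | hoK
      · obtain ⟨t, ht⟩ := heK
        have hK : K = 2*t := by omega
        subst hK
        have hc : ((2*t:ℕ):ℤ)+1 = ((2*t+1:ℕ):ℤ) := by push_cast; ring
        rw [hc, mul_comm (1 - T ((2*t+1:ℕ):ℤ)) (Xk (2*t)), ← Xk_odd t]
      · obtain ⟨m, hm⟩ := hoK
        subst hm
        have hc : ((2*m+1:ℕ):ℤ)+1 = ((2*m+2:ℕ):ℤ) := by push_cast; ring
        rw [hc]
        rw [show (2*m+1+1) = 2*m+2 by omega]
        rw [Xk_even_split m, Xk_odd_split m]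
        exact ⟨1 - T ((m+1:ℕ):ℤ), by ring⟩
    have hstep : ∀ B' : ℤ, Xk (K+1) ∣ TT (K+1) (2*a+1) (B'+1) - TT (K+1) (2*a+1) B' := by
      intro B'
      rw [TT_step]
      obtain ⟨y, hy⟩ := hprev ((2*a+1)+B')
      obtain ⟨z, hz⟩ := hXstep
      refine ⟨T B' * (z * y), ?_⟩
      rw [hy]
      calc T B' * (1 - T ((K:ℤ)+1)) * (Xk K * y)
          = T B' * ((1 - T ((K:ℤ)+1)) * Xk K) * y := by ring
        _ = T B' * (Xk (K+1) * z) * y := by rw [hz]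
        _ = Xk (K+1) * (T B' * (z * y)) := by ring
    have hup : ∀ (n : ℕ) (B' : ℤ),
        Xk (K+1) ∣ TT (K+1) (2*a+1) (B'+(n:ℤ)) - TT (K+1) (2*a+1) B' := by
      intro n
      induction n with
      | zero => intro B'; simp
      | succ n ihn =>
        intro B'
        have harg : B' + ((n+1:ℕ):ℤ) = (B' + (n:ℤ)) + 1 := by push_cast; ring
        rw [harg]
        have hsplit : TT (K+1) (2*a+1) ((B'+(n:ℤ))+1) - TT (K+1) (2*a+1) B'
            = (TT (K+1) (2*a+1) ((B'+(n:ℤ))+1) - TT (K+1) (2*a+1) (B'+(n:ℤ)))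
              + (TT (K+1) (2*a+1) (B'+(n:ℤ)) - TT (K+1) (2*a+1) B') := by ring
        rw [hsplit]
        exact dvd_add (hstep (B'+(n:ℤ))) (ihn B')
    have hindep : ∀ B₁ B₂ : ℤ, Xk (K+1) ∣ TT (K+1) (2*a+1) B₁ - TT (K+1) (2*a+1) B₂ := by
      intro B₁ B₂
      rcases le_total B₂ B₁ with h | h
      · obtain ⟨n, hn⟩ := Int.le.dest h
        have := hup n B₂
        rw [hn] at this
        exact this
      · obtain ⟨n, hn⟩ := Int.le.dest h
        have := hup n B₁
        rw [hn] at this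
        have hneg := dvd_neg.mpr this
        rw [neg_sub] at hneg
        exact hneg
    rcases Nat.even_or_odd (K+1) with he | ho
    · -- even case : K+1 = 2m+2
      obtain ⟨m, hm⟩ : ∃ m, K = 2*m+1 := by
        obtain ⟨c, hc⟩ := he
        exact ⟨c-1, by omega⟩
      subst hm
      rw [show (2*m+1+1) = 2*m+2 by omega] at hindep ⊢
      have hXm1 : Xk (2*m+1) ∣ TT (2*m+2) (2*a+1) B := by
        rw [show (2*m+2) = (2*m+1)+1 by omega, TT_rec]
        exact dvd_sub (hprev B) (Dvd.dvd.mul_left (hprev ((2*a+1)+B-1)) _)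
      have hE : ∀ B' : ℤ,
          Xk (2*m+2) ∣ (1 - T ((2*a+1) * c2 (2*m+2) + B' * ((2*m+2:ℕ):ℤ))) * TT (2*m+2) (2*a+1) B := by
        intro B'
        have hrefl := TT_reflect (2*m+2) (2*a+1) B'
        have heven : ((-1:Rq))^(2*m+2) = 1 := Even.neg_one_pow ⟨m+1, by ring⟩
        rw [heven, one_mul] at hrefl
        have hkey : (1 - T ((2*a+1) * c2 (2*m+2) + B' * ((2*m+2:ℕ):ℤ))) * TT (2*m+2) (2*a+1) B
            = (TT (2*m+2) (2*a+1) B - TT (2*m+2) (2*a+1) B')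
              + ((TT (2*m+2) (2*a+1) B'
                  - T ((2*a+1) * c2 (2*m+2) + B' * ((2*m+2:ℕ):ℤ))
                    * TT (2*m+2) (2*a+1) (-((2*a+1) * (((2*m+2:ℕ):ℤ)-1)) - B'))
                 + T ((2*a+1) * c2 (2*m+2) + B' * ((2*m+2:ℕ):ℤ))
                    * (TT (2*m+2) (2*a+1) (-((2*a+1) * (((2*m+2:ℕ):ℤ)-1)) - B')
                       - TT (2*m+2) (2*a+1) B)) := by ring
        rw [hkey]
        apply dvd_add (hindep B B')
        apply dvd_add
        · rw [← hrefl, sub_self]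
          exact dvd_zero _
        · exact Dvd.dvd.mul_left (hindep _ B) _
      have hPadd : ∀ x y : ℤ,
          Xk (2*m+2) ∣ (1 - T x) * TT (2*m+2) (2*a+1) B →
          Xk (2*m+2) ∣ (1 - T y) * TT (2*m+2) (2*a+1) B →
          Xk (2*m+2) ∣ (1 - T (x+y)) * TT (2*m+2) (2*a+1) B := by
        intro x y hx hy
        have hid : (1 - T (x+y)) * TT (2*m+2) (2*a+1) B
            = (1 - T x) * TT (2*m+2) (2*a+1) B + T x * ((1 - T y) * TT (2*m+2) (2*a+1) B) := by
          rw [T_add]; ring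
        rw [hid]
        exact dvd_add hx (Dvd.dvd.mul_left hy _)
      have hPneg : ∀ x : ℤ,
          Xk (2*m+2) ∣ (1 - T x) * TT (2*m+2) (2*a+1) B →
          Xk (2*m+2) ∣ (1 - T (-x)) * TT (2*m+2) (2*a+1) B := by
        intro x hx
        have hTx : (T (-x) : Rq) * T x = 1 := by
          rw [← T_add, neg_add_cancel, T_zero]
        have hid : (1 - T (-x)) * TT (2*m+2) (2*a+1) B
            = (-(T (-x))) * ((1 - T x) * TT (2*m+2) (2*a+1) B) := by
          calc (1 - T (-x)) * TT (2*m+2) (2*a+1) B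
              = (T (-x) * T x - T (-x)) * TT (2*m+2) (2*a+1) B := by rw [hTx]
            _ = (-(T (-x))) * ((1 - T x) * TT (2*m+2) (2*a+1) B) := by ring
        rw [hid]
        exact Dvd.dvd.mul_left hx _
      have hP0 : Xk (2*m+2) ∣ (1 - T 0) * TT (2*m+2) (2*a+1) B := by
        simp only [T_zero, sub_self, zero_mul]
        exact dvd_zero _
      have hPnat : ∀ (c : ℕ) (x : ℤ),
          Xk (2*m+2) ∣ (1 - T x) * TT (2*m+2) (2*a+1) B →
          Xk (2*m+2) ∣ (1 - T ((c:ℤ) * x)) * TT (2*m+2) (2*a+1) B := by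
        intro c
        induction c with
        | zero =>
          intro x _
          rw [show ((0:ℕ):ℤ) * x = 0 by push_cast; ring]
          exact hP0
        | succ c ihc =>
          intro x hx
          rw [show ((c+1:ℕ):ℤ) * x = (c:ℤ)*x + x by push_cast; ring]
          exact hPadd _ _ (ihc x hx) hx
      have hPint : ∀ (c : ℤ) (x : ℤ),
          Xk (2*m+2) ∣ (1 - T x) * TT (2*m+2) (2*a+1) B →
          Xk (2*m+2) ∣ (1 - T (c * x)) * TT (2*m+2) (2*a+1) B := by
        intro c x hx
        obtain ⟨n, hn | hn⟩ := Int.eq_nat_or_neg c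
        · rw [hn]; exact hPnat n x hx
        · rw [hn, show (-(n:ℤ)) * x = -((n:ℤ)*x) by ring]
          exact hPneg _ (hPnat n x hx)
      have hc2v : c2 (2*m+2) = ((m:ℤ)+1) * (2*(m:ℤ)+1) := by
        have h2 := two_c2 (2*m+2)
        push_cast at h2
        have h2' : 2 * c2 (2*m+2) = 2 * (((m:ℤ)+1) * (2*(m:ℤ)+1)) := by linear_combination h2
        linarith
      have hPk : Xk (2*m+2) ∣ (1 - T (((2*m+2:ℕ)):ℤ)) * TT (2*m+2) (2*a+1) B := by
        have := hPadd _ _ (hE 1) (hPneg _ (hE 0))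
        rw [show (2*a+1) * c2 (2*m+2) + 1 * ((2*m+2:ℕ):ℤ)
            + -((2*a+1) * c2 (2*m+2) + 0 * ((2*m+2:ℕ):ℤ)) = (((2*m+2:ℕ)):ℤ) by ring] at this
        exact this
      have hPm : Xk (2*m+2) ∣ (1 - T ((m:ℤ)+1)) * TT (2*m+2) (2*a+1) B := by
        have hc := hPint (2*a*((m:ℤ)+1) + ((m:ℤ)+1) - a - 1) _ hPk
        have := hPadd _ _ (hE 0) (hPneg _ hc)
        rw [show (2*a+1) * c2 (2*m+2) + 0 * ((2*m+2:ℕ):ℤ)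
            + -((2*a*((m:ℤ)+1) + ((m:ℤ)+1) - a - 1) * ((2*m+2:ℕ):ℤ)) = (m:ℤ)+1 by
          rw [hc2v]; push_cast; ring] at this
        exact this
      -- assembly
      have hMz : ((m+1:ℕ):ℤ) = (m:ℤ)+1 := by push_cast; ring
      obtain ⟨s, hs⟩ := hXm1
      rw [Xk_odd_split m, hMz] at hs
      obtain ⟨w, hw⟩ := hPm
      rw [Xk_even_split m] at hw
      have hfact : (1 - T ((2*m+2:ℕ):ℤ) : Rq) = (1 - T ((m:ℤ)+1)) * (1 + T ((m:ℤ)+1)) := by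
        have h2m : ((2*m+2:ℕ):ℤ) = ((m:ℤ)+1) + ((m:ℤ)+1) := by push_cast; ring
        rw [h2m, T_add]
        ring
      have hMne : ((m:ℤ)+1) ≠ 0 := by omega
      have hcancel1 : (1 - T ((m:ℤ)+1)) * (VV m * s) = (1 + T ((m:ℤ)+1)) * (VV m * w) := by
        apply mul_left_cancel₀ (one_sub_T_ne_zero hMne)
        calc (1 - T ((m:ℤ)+1)) * ((1 - T ((m:ℤ)+1)) * (VV m * s))
            = (1 - T ((m:ℤ)+1)) * ((1 - T ((m:ℤ)+1)) * VV m * s) := by ring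
          _ = (1 - T ((m:ℤ)+1)) * TT (2*m+2) (2*a+1) B := by rw [← hs]
          _ = VV m * (1 - T ((2*m+2:ℕ):ℤ)) * w := hw
          _ = (1 - T ((m:ℤ)+1)) * ((1 + T ((m:ℤ)+1)) * (VV m * w)) := by rw [hfact]; ring
      have hcancel2 : (1 - T ((m:ℤ)+1)) * s = (1 + T ((m:ℤ)+1)) * w := by
        apply mul_left_cancel₀ (VV_ne_zero m)
        calc VV m * ((1 - T ((m:ℤ)+1)) * s) = (1 - T ((m:ℤ)+1)) * (VV m * s) := by ring
          _ = (1 + T ((m:ℤ)+1)) * (VV m * w) := hcancel1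
          _ = VV m * ((1 + T ((m:ℤ)+1)) * w) := by ring
      have h2s : (1 + T ((m:ℤ)+1)) * (s + w) = 2 * s := by
        calc (1 + T ((m:ℤ)+1)) * (s + w)
            = (1 + T ((m:ℤ)+1)) * s + (1 + T ((m:ℤ)+1)) * w := by ring
          _ = (1 + T ((m:ℤ)+1)) * s + (1 - T ((m:ℤ)+1)) * s := by rw [← hcancel2]
          _ = 2 * s := by ring
      have hL2two : (2 : L2) = 0 := by
        have h11 : (2:L2) = 1 + 1 := by norm_num
        rw [h11, AddMonoidAlgebra.one_def]
        rw [← AddMonoidAlgebra.single_add]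
        rw [show ((1:ZMod 2) + 1) = 0 by decide]
        exact AddMonoidAlgebra.single_zero 0
      have hpi : piH (1 + T ((m:ℤ)+1)) * piH (s + w) = 0 := by
        have h1 : piH ((1 + T ((m:ℤ)+1)) * (s + w)) = piH (2 * s) := by rw [h2s]
        rw [map_mul, map_mul] at h1
        have h2' : piH (2 : Rq) = 0 := by
          rw [show ((2:Rq)) = (((2:ℤ)):Rq) by norm_cast, map_intCast]
          rw [show (((2:ℤ)):L2) = (2:L2) by norm_cast]
          exact hL2two
        rw [h2', zero_mul] at h1
        exact h1
      have hzero : piH (s + w) = 0 := by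
        rcases mul_eq_zero.mp hpi with h | h
        · exfalso
          rw [map_add, map_one, piH_T] at h
          exact one_add_T_ne_zero_L2 hMne h
        · exact h
      obtain ⟨u, hu⟩ := eq_two_mul_of_piH_zero hzero
      have h2su : 2 * s = 2 * ((1 + T ((m:ℤ)+1)) * u) := by
        rw [← h2s, hu]; ring
      have hsu := two_mul_cancel h2su
      refine ⟨u, ?_⟩
      rw [hs, hsu, Xk_even_split m, hfact]
      ring
    · -- odd case : K+1 = 2t+1
      obtain ⟨t, ht⟩ := ho
      rw [ht] at hindep ⊢
      obtain ⟨y, hy⟩ := hindep B (-((2*a+1) * (t:ℤ)))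
      rw [TT_odd_vanish t (2*a+1), sub_zero] at hy
      exact ⟨y, hy⟩

/-- For every positive integer `k` and integral quadratic form `Q`, `X_k` divides
`Σ_{j=0}^{k} (-1)^j binomq(k,j) q^{Q(j)+j(j-1)/2}` in `ℤ[q^{±1}]`. -/
theorem stmt_3 (k : ℕ) (hk : 1 ≤ k) (Q : ℤ → ℤ) (hQ : IsIntegralQuadraticForm Q) :
    ∃ c : Rq,
      ∑ j ∈ Finset.range (k + 1),
          (-1 : Kq) ^ j * binomK (k : ℤ) j * qK ^ (Q (j : ℤ) + ((j * (j - 1) / 2 : ℕ) : ℤ)) =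
        mapRq (Xk k) * mapRq c := by
  obtain ⟨a₂, a₁, a₀, hQf⟩ := hQ
  obtain ⟨u, hu⟩ := Xk_dvd_TT k a₂ (a₂ + a₁)
  refine ⟨T a₀ * u, ?_⟩
  have hsum : ∀ j ∈ Finset.range (k+1),
      (-1 : Kq) ^ j * binomK (k : ℤ) j * qK ^ (Q (j : ℤ) + ((j * (j - 1) / 2 : ℕ) : ℤ))
      = ev (((-1:Rq))^j * gb k j * T ((2*a₂+1) * c2 j + (a₂+a₁) * (j:ℤ) + a₀)) := by
    intro j hj
    have hjk : j ≤ k := by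
      have := Finset.mem_range.mp hj; omega
    rw [map_mul, map_mul, map_pow, map_neg, map_one, ev_T, binomK_eq_ev_gb hjk]
    have hexp : Q (j:ℤ) + ((j * (j - 1) / 2 : ℕ) : ℤ)
        = (2*a₂+1) * c2 j + (a₂+a₁) * (j:ℤ) + a₀ := by
      rw [hQf]
      have h2 := two_c2 j
      have hc2d : c2 j = ((j * (j - 1) / 2 : ℕ) : ℤ) := rfl
      rw [← hc2d]
      linear_combination (-a₂) * h2
    rw [hexp]
  rw [Finset.sum_congr rfl hsum, ← map_sum]
  have hS : ∑ j ∈ Finset.range (k+1),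
      ((-1:Rq))^j * gb k j * T ((2*a₂+1) * c2 j + (a₂+a₁) * (j:ℤ) + a₀)
      = T a₀ * TT k (2*a₂+1) (a₂+a₁) := by
    rw [TT, Finset.mul_sum]
    apply Finset.sum_congr rfl
    intro j _
    rw [show (2*a₂+1) * c2 j + (a₂+a₁) * (j:ℤ) + a₀
        = a₀ + ((2*a₂+1) * c2 j + (a₂+a₁) * (j:ℤ)) by ring, T_add]
    ring
  rw [hS, hu, mapRq_eq_ev, mapRq_eq_ev, ← map_mul]
  congr 1
  ring
end
end

section
/- For every integer a and every nonnegative integer k, the polynomial (q^a z_1 z_2; q)_k ∈ ℚ(q)[z_1,z_2] is a ℤ[q^{±1}]-linear combination of the polynomials ((q;q)_k/((q;q)_{k_1}(q;q)_{k_2}))·(z_1;q)_{k_1}·(z_2;q)_{k_2} with k_1 ≤ k and k_2 ≤ k. -/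
noncomputable section

/-- `ℤ[q^{±1}]` regarded as a subring of `ℚ(q)`: the subring generated by `q` and `q⁻¹`. -/
def ZLaurent : Subring Kq := Subring.closure {qK, qK⁻¹}

/-- `(q;q)_m = ∏_{t=0}^{m-1} (1 - q^{t+1})` in `ℚ(q)`. -/
def qPochK (m : ℕ) : Kq := ∏ t ∈ Finset.range m, (1 - qK ^ (t + 1))

/-- `(z;q)_m = ∏_{t=0}^{m-1} (1 - q^t z)` for a variable `z` of `ℚ(q)[z_1,z_2]`. -/
def zPoch (i : Fin 2) (m : ℕ) : MvPolynomial (Fin 2) Kq :=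
  ∏ t ∈ Finset.range m, (1 - MvPolynomial.C (qK ^ t) * MvPolynomial.X i)

/-! ### Auxiliary lemmas -/

lemma qK_ne_zero : qK ≠ 0 := RatFunc.X_ne_zero

lemma qK_pow_ne_one {s : ℕ} (hs : 0 < s) : qK ^ s ≠ 1 := by
  intro h
  have : (algebraMap (Polynomial ℚ) (RatFunc ℚ)) (Polynomial.X ^ s - 1) = 0 := by
    simp only [map_sub, map_pow, map_one]
    rw [show (algebraMap (Polynomial ℚ) (RatFunc ℚ)) Polynomial.X = qK from rfl, h, sub_self]
  have h2 := (map_eq_zero_iff _ (RatFunc.algebraMap_injective ℚ)).mp this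
  have := Polynomial.X_pow_sub_C_ne_zero hs (1 : ℚ)
  rw [Polynomial.C_1] at this
  exact this h2

lemma one_sub_qK_pow_ne_zero_s6 {s : ℕ} (hs : 0 < s) : 1 - qK ^ s ≠ 0 := by
  intro h
  exact qK_pow_ne_one hs (sub_eq_zero.mp h).symm

lemma qPochK_ne_zero (m : ℕ) : qPochK m ≠ 0 := by
  unfold qPochK
  exact Finset.prod_ne_zero_iff.mpr fun t _ => one_sub_qK_pow_ne_zero_s6 (Nat.succ_pos t)

lemma qK_mem : qK ∈ ZLaurent := Subring.subset_closure (by simp)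
lemma qK_inv_mem : qK⁻¹ ∈ ZLaurent := Subring.subset_closure (by simp)

lemma qK_zpow_mem (n : ℤ) : qK ^ n ∈ ZLaurent := by
  cases n with
  | ofNat m => simpa using pow_mem qK_mem m
  | negSucc m =>
      rw [zpow_negSucc, ← inv_pow]
      exact pow_mem qK_inv_mem _

lemma qPochK_succ (m : ℕ) : qPochK (m+1) = qPochK m * (1 - qK ^ (m+1)) :=
  Finset.prod_range_succ _ m

lemma qPochK_ratio_mem {i r : ℕ} (h : i ≤ r) : qPochK r * (qPochK i)⁻¹ ∈ ZLaurent := by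
  induction r with
  | zero => simpa [Nat.le_zero.mp h, qPochK] using one_mem ZLaurent
  | succ r ih =>
      rcases Nat.eq_or_lt_of_le h with rfl | h'
      · rw [mul_inv_cancel₀ (qPochK_ne_zero _)]; exact one_mem _
      · have hir : i ≤ r := Nat.lt_succ_iff.mp h'
        rw [qPochK_succ, mul_comm (qPochK r) _, mul_assoc]
        exact mul_mem (sub_mem (one_mem _) (by simpa using pow_mem qK_mem (r+1))) (ih hir)

/-! ### q-binomials with integer top -/

/-- `(q^α; q)_r = ∏_{t<r} (1 - q^{α+t})`. -/
def pI (α : ℤ) (r : ℕ) : Kq := ∏ t ∈ Finset.range r, (1 - qK ^ (α + t))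

/-- `(q^α;q)_r / (q;q)_r`, a q-binomial coefficient with integer top. -/
def dv (α : ℤ) (r : ℕ) : Kq := pI α r * (qPochK r)⁻¹

lemma pI_succ (α : ℤ) (r : ℕ) : pI α (r+1) = pI α r * (1 - qK ^ (α + r)) :=
  Finset.prod_range_succ _ r

lemma pI_succ' (α : ℤ) (r : ℕ) : pI (α - 1) (r+1) = pI α r * (1 - qK ^ (α - 1)) := by
  rw [pI, Finset.prod_range_succ']
  congr 1
  · apply Finset.prod_congr rfl
    intro t _
    congr 2
    push_cast
    ring
  · simp

lemma key_rec (α : ℤ) (r : ℕ) :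
    pI α (r+1) = (1 - qK ^ (r+1)) * pI α r + qK ^ (r+1) * pI (α - 1) (r+1) := by
  rw [pI_succ, pI_succ']
  have : (qK : Kq) ^ (r+1) * qK ^ (α - 1) = qK ^ (α + r) := by
    rw [← zpow_natCast qK (r+1), ← zpow_add₀ qK_ne_zero]
    congr 1
    push_cast
    ring
  ring_nf
  rw [← this]
  ring_nf

lemma dv_rec (α : ℤ) (r : ℕ) :
    dv α (r+1) = dv α r + qK ^ (r+1) * dv (α - 1) (r+1) := by
  unfold dv
  rw [key_rec α r, qPochK_succ]
  have h1 : qPochK r ≠ 0 := qPochK_ne_zero r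
  have h2 : (1 : Kq) - qK ^ (r+1) ≠ 0 := by
    have := qPochK_ne_zero (r+1)
    rw [qPochK_succ] at this
    exact right_ne_zero_of_mul this
  field_simp

lemma dv_zero (α : ℤ) : dv α 0 = 1 := by
  simp [dv, pI, qPochK]

lemma dv_zero_top (r : ℕ) : dv 0 (r+1) = 0 := by
  have : pI 0 (r+1) = 0 := by
    apply Finset.prod_eq_zero (Finset.mem_range.mpr (Nat.succ_pos r))
    simp
  simp [dv, this]

lemma dv_mem (α : ℤ) (r : ℕ) : dv α r ∈ ZLaurent := by
  induction r generalizing α with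
  | zero => rw [dv_zero]; exact one_mem _
  | succ r ih =>
      induction α using Int.induction_on with
      | zero => rw [dv_zero_top]; exact zero_mem _
      | succ n hn =>
          rw [show (n : ℤ) + 1 = (n + 1 : ℤ) from rfl, dv_rec]
          simp only [add_sub_cancel_right]
          exact add_mem (ih _) (mul_mem (by simpa using pow_mem qK_mem (r+1)) hn)
      | pred n hn =>
          have h := dv_rec (-n) r
          have hq : (qK : Kq) ^ (r+1) ≠ 0 := pow_ne_zero _ qK_ne_zero
          have heq : dv (-n - 1) (r+1) = (qK⁻¹) ^ (r+1) * (dv (-n) (r+1) - dv (-n) r) := by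
            rw [inv_pow, h]
            field_simp
            ring
          rw [heq]
          exact mul_mem (pow_mem qK_inv_mem _) (sub_mem hn (ih _))

/-! ### q-binomial coefficients and the master identity -/

/-- the q-binomial coefficient as an element of `Kq`. -/
def qbin (n j : ℕ) : Kq := qPochK n * (qPochK j)⁻¹ * (qPochK (n - j))⁻¹

lemma qbin_zero (n : ℕ) : qbin n 0 = 1 := by
  simp only [qbin, Nat.sub_zero]
  rw [show qPochK 0 = 1 by simp [qPochK], inv_one, mul_one, mul_inv_cancel₀ (qPochK_ne_zero n)]

lemma qbin_self (n : ℕ) : qbin n n = 1 := by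
  simp only [qbin, Nat.sub_self]
  rw [show qPochK 0 = 1 by simp [qPochK], inv_one, mul_one, mul_inv_cancel₀ (qPochK_ne_zero n)]

lemma qbin_pascal {n j : ℕ} (h1 : 1 ≤ j) (h2 : j ≤ n) :
    qbin (n+1) j = qbin n j + qK ^ (n + 1 - j) * qbin n (j-1) := by
  obtain ⟨j', rfl⟩ := Nat.exists_eq_add_of_le h1
  obtain ⟨m, hm⟩ := Nat.exists_eq_add_of_le h2
  subst hm
  have e1 : 1 + j' + m + 1 - (1 + j') = m + 1 := by omega
  have e2 : 1 + j' + m - (1 + j') = m := by omega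
  have e3 : 1 + j' - 1 = j' := by omega
  have e4 : 1 + j' + m - j' = m + 1 := by omega
  rw [e1, e3]
  unfold qbin
  rw [e2, e4, show 1 + j' + m + 1 = (1 + j' + m) + 1 from rfl, qPochK_succ (1 + j' + m),
    show (1:ℕ) + j' = j' + 1 by omega, qPochK_succ j', qPochK_succ m]
  have h1 := qPochK_ne_zero (1 + j' + m); rw [show (1:ℕ)+j'+m = j'+1+m by omega] at h1
  have h2 := qPochK_ne_zero (j'+1); rw [qPochK_succ j'] at h2
  have h3 := qPochK_ne_zero (m+1); rw [qPochK_succ m] at h3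
  have h4 := qPochK_ne_zero j'
  have h5 := qPochK_ne_zero m
  have h6 : (1:Kq) - qK ^ (j'+1) ≠ 0 := right_ne_zero_of_mul h2
  have h7 : (1:Kq) - qK ^ (m+1) ≠ 0 := right_ne_zero_of_mul h3
  rw [show j'+1+m+1-(j'+1) = m+1 by omega, qPochK_succ m]
  have key : (1:Kq) - qK ^ (j'+1+m+1) = (1 - qK^(m+1)) + qK^(m+1) * (1 - qK^(j'+1)) := by
    have h : qK ^ (m+1) * qK ^ (j'+1) = qK ^ (j'+1+m+1) := by
      rw [← pow_add]; congr 1; omega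
    linear_combination -h
  field_simp
  linear_combination (qPochK (j'+1+m) * qPochK j' * qPochK m * qPochK j' * qPochK m *
    (1 - qK^(m+1)) * (1 - qK^(j'+1))) * key

section Master
variable {S : Type*} [CommRing S] [Algebra Kq S]

/-- The master identity: `(AB;q)_n = Σ_j qbin(n,j) B^j (A;q)_j (B;q)_{n-j}`. -/
lemma master (n : ℕ) (A B : S) :
    ∏ t ∈ Finset.range n, (1 - algebraMap Kq S (qK ^ t) * (A * B)) =
      ∑ j ∈ Finset.range (n+1), algebraMap Kq S (qbin n j) * B ^ j *
        (∏ t ∈ Finset.range j, (1 - algebraMap Kq S (qK ^ t) * A)) *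
        (∏ t ∈ Finset.range (n - j), (1 - algebraMap Kq S (qK ^ t) * B)) := by
  set φ := algebraMap Kq S with hφ
  induction n with
  | zero => simp [qbin_zero]
  | succ n ih =>
      rw [Finset.prod_range_succ, ih, Finset.sum_mul]
      have point : ∀ j ∈ Finset.range (n+1),
          (φ (qbin n j) * B ^ j * (∏ t ∈ Finset.range j, (1 - φ (qK ^ t) * A)) *
            (∏ t ∈ Finset.range (n - j), (1 - φ (qK ^ t) * B))) * (1 - φ (qK ^ n) * (A * B)) =
          φ (qbin n j) * (B ^ j * (∏ t ∈ Finset.range j, (1 - φ (qK ^ t) * A)) *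
            (∏ t ∈ Finset.range (n + 1 - j), (1 - φ (qK ^ t) * B)))
          + φ (qK ^ (n - j) * qbin n j) * (B ^ (j+1) *
            (∏ t ∈ Finset.range (j+1), (1 - φ (qK ^ t) * A)) *
            (∏ t ∈ Finset.range (n - j), (1 - φ (qK ^ t) * B))) := by
        intro j hj
        have hjn : j ≤ n := Nat.lt_succ_iff.mp (Finset.mem_range.mp hj)
        have hB : (∏ t ∈ Finset.range (n + 1 - j), (1 - φ (qK ^ t) * B)) =
            (∏ t ∈ Finset.range (n - j), (1 - φ (qK ^ t) * B)) * (1 - φ (qK ^ (n-j)) * B) := by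
          rw [show n + 1 - j = (n - j) + 1 by omega]
          exact Finset.prod_range_succ _ _
        have hA : (∏ t ∈ Finset.range (j+1), (1 - φ (qK ^ t) * A)) =
            (∏ t ∈ Finset.range j, (1 - φ (qK ^ t) * A)) * (1 - φ (qK ^ j) * A) :=
          Finset.prod_range_succ _ _
        rw [hB, hA, map_mul]
        have hq : φ (qK ^ (n-j)) * φ (qK ^ j) = φ (qK ^ n) := by
          rw [← map_mul, ← pow_add, show n - j + j = n by omega]
        linear_combination (φ (qbin n j) * B ^ j * (∏ t ∈ Finset.range j, (1 - φ (qK ^ t) * A)) *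
          (∏ t ∈ Finset.range (n - j), (1 - φ (qK ^ t) * B)) * A * B) * hq
      rw [Finset.sum_congr rfl point, Finset.sum_add_distrib]
      have lhs1 : ∑ j ∈ Finset.range (n+1), φ (qbin n j) * (B ^ j *
            (∏ t ∈ Finset.range j, (1 - φ (qK ^ t) * A)) *
            (∏ t ∈ Finset.range (n + 1 - j), (1 - φ (qK ^ t) * B))) =
          ∑ j ∈ Finset.range (n+2), (if j ≤ n then φ (qbin n j) else 0) * (B ^ j *
            (∏ t ∈ Finset.range j, (1 - φ (qK ^ t) * A)) *
            (∏ t ∈ Finset.range (n + 1 - j), (1 - φ (qK ^ t) * B))) := by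
        rw [Finset.sum_range_succ (n := n+1)]
        simp only [show ¬ (n+1 ≤ n) by omega, if_false, zero_mul, add_zero]
        apply Finset.sum_congr rfl
        intro j hj
        have : j ≤ n := Nat.lt_succ_iff.mp (Finset.mem_range.mp hj)
        simp [this]
      have lhs2 : ∑ j ∈ Finset.range (n+1), φ (qK ^ (n - j) * qbin n j) * (B ^ (j+1) *
            (∏ t ∈ Finset.range (j+1), (1 - φ (qK ^ t) * A)) *
            (∏ t ∈ Finset.range (n - j), (1 - φ (qK ^ t) * B))) =
          ∑ j ∈ Finset.range (n+2), (if 1 ≤ j then φ (qK ^ (n + 1 - j) * qbin n (j-1)) else 0) *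
            (B ^ j * (∏ t ∈ Finset.range j, (1 - φ (qK ^ t) * A)) *
            (∏ t ∈ Finset.range (n + 1 - j), (1 - φ (qK ^ t) * B))) := by
        rw [Finset.sum_range_succ' (n := n+1)]
        simp only [show ¬ (1 ≤ 0) by omega, if_false, zero_mul, add_zero]
        apply Finset.sum_congr rfl
        intro j hj
        have hj' : j ≤ n := Nat.lt_succ_iff.mp (Finset.mem_range.mp hj)
        simp only [show 1 ≤ j + 1 by omega, if_true]
        rw [show n + 1 - (j+1) = n - j by omega, show j + 1 - 1 = j from rfl]
      rw [lhs1, lhs2, ← Finset.sum_add_distrib]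
      apply Finset.sum_congr rfl
      intro j hj
      have hjn : j ≤ n + 1 := Nat.lt_succ_iff.mp (Finset.mem_range.mp hj)
      have coef : (if j ≤ n then φ (qbin n j) else 0)
          + (if 1 ≤ j then φ (qK ^ (n + 1 - j) * qbin n (j-1)) else 0) = φ (qbin (n+1) j) := by
        rcases Nat.eq_zero_or_pos j with rfl | hj1
        · simp [qbin_zero]
        · rcases Nat.lt_or_ge j (n+1) with hlt | hge
          · have h1 : j ≤ n := by omega
            rw [if_pos h1, if_pos (show 1 ≤ j from hj1), qbin_pascal hj1 h1, map_add]
          · have hj' : j = n + 1 := by omega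
            subst hj'
            rw [if_neg (by omega), if_pos (by omega), qbin_self,
              show n + 1 - (n+1) = 0 by omega, show n + 1 - 1 = n from rfl, qbin_self]
            simp
      rw [← add_mul, coef]
      ring
end Master

/-! ### span technology -/

abbrev R2 := MvPolynomial (Fin 2) Kq
open MvPolynomial Finset

lemma algC : algebraMap Kq R2 = (MvPolynomial.C : Kq →+* R2) := rfl

lemma zPoch_def (i : Fin 2) (m : ℕ) :
    ∏ t ∈ Finset.range m, (1 - C (qK ^ t) * X i) = zPoch i m := rfl

lemma zPoch_succ (i : Fin 2) (m : ℕ) :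
    zPoch i (m+1) = zPoch i m * (1 - C (qK ^ m) * X i) := prod_range_succ _ _

lemma subring_smul_def (b : ↥ZLaurent) (p : R2) : b • p = C (b : Kq) * p := by
  rw [Algebra.smul_def]; rfl

lemma X_mul_zPoch (i : Fin 2) (r : ℕ) :
    X i * zPoch i r = ((qK⁻¹)^r : Kq) • zPoch i r - ((qK⁻¹)^r : Kq) • zPoch i (r+1) := by
  rw [zPoch_succ, smul_eq_C_mul, smul_eq_C_mul]
  have h : (C ((qK⁻¹)^r) : R2) * C (qK ^ r) = 1 := by
    rw [← map_mul, inv_pow, inv_mul_cancel₀ (pow_ne_zero r qK_ne_zero), map_one]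
  linear_combination (-(zPoch i r * X i)) * h

/-- multiplication maps a span into a submodule pointwise -/
lemma mul_span_mem {T : Set R2} {M : Submodule ↥ZLaurent R2} (m : R2)
    (hT : ∀ x ∈ T, m * x ∈ M) {p : R2} (hp : p ∈ Submodule.span ↥ZLaurent T) : m * p ∈ M := by
  induction hp using Submodule.span_induction with
  | mem x hx => exact hT x hx
  | zero => rw [mul_zero]; exact zero_mem _
  | add x y _ _ hx hy => rw [mul_add]; exact add_mem hx hy
  | smul b x _ hx => rw [mul_smul_comm]; exact Submodule.smul_mem _ b hx

lemma pow_mul_zPoch_mem (i : Fin 2) (j r0 : ℕ) :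
    X i ^ j * zPoch i r0 ∈
      Submodule.span ↥ZLaurent {p : R2 | ∃ r, r0 ≤ r ∧ r ≤ r0 + j ∧ p = zPoch i r} := by
  induction j generalizing r0 with
  | zero =>
      rw [pow_zero, one_mul]
      exact Submodule.subset_span ⟨r0, le_refl _, by omega, rfl⟩
  | succ j ih =>
      rw [pow_succ, mul_assoc, X_mul_zPoch, mul_sub]
      apply sub_mem
      · rw [mul_smul_comm]
        have hb : ((qK⁻¹)^r0 : Kq) ∈ ZLaurent := pow_mem qK_inv_mem r0
        have : ((qK⁻¹)^r0 : Kq) • (X i ^ j * zPoch i r0) =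
            (⟨_, hb⟩ : ↥ZLaurent) • (X i ^ j * zPoch i r0) := rfl
        rw [this]
        apply Submodule.smul_mem
        refine Submodule.span_mono ?_ (ih r0)
        rintro p ⟨r, h1, h2, rfl⟩
        exact ⟨r, h1, by omega, rfl⟩
      · rw [mul_smul_comm]
        have hb : ((qK⁻¹)^r0 : Kq) ∈ ZLaurent := pow_mem qK_inv_mem r0
        have : ((qK⁻¹)^r0 : Kq) • (X i ^ j * zPoch i (r0+1)) =
            (⟨_, hb⟩ : ↥ZLaurent) • (X i ^ j * zPoch i (r0+1)) := rfl
        rw [this]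
        apply Submodule.smul_mem
        refine Submodule.span_mono ?_ (ih (r0+1))
        rintro p ⟨r, h1, h2, rfl⟩
        exact ⟨r, by omega, by omega, rfl⟩

/-! ### Main theorem -/

/-- `(q^a z_1 z_2;q)_k` is a `ℤ[q^{±1}]`-linear combination of the polynomials
`((q;q)_k/((q;q)_{k_1}(q;q)_{k_2}))·(z_1;q)_{k_1}(z_2;q)_{k_2}` with `k_1, k_2 ≤ k`. -/
theorem stmt_6 (a : ℤ) (k : ℕ) :
    ∃ c : (Fin 2 → ℕ) →₀ Kq, (∀ k', c k' ∈ ZLaurent) ∧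
      (∀ k' ∈ c.support, k' 0 ≤ k ∧ k' 1 ≤ k) ∧
      (∏ t ∈ Finset.range k,
          (1 - MvPolynomial.C (qK ^ (a + (t : ℤ))) * (MvPolynomial.X 0 * MvPolynomial.X 1))) =
        c.sum fun k' b =>
          MvPolynomial.C (b * (qPochK k * ((qPochK (k' 0))⁻¹ * (qPochK (k' 1))⁻¹))) *
            (zPoch 0 (k' 0) * zPoch 1 (k' 1)) := by
  classical
  set v : (Fin 2 → ℕ) → R2 := fun k' =>
    C (qPochK k * ((qPochK (k' 0))⁻¹ * (qPochK (k' 1))⁻¹)) *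
      (zPoch 0 (k' 0) * zPoch 1 (k' 1)) with hv
  set s : Set (Fin 2 → ℕ) := {k' | k' 0 ≤ k ∧ k' 1 ≤ k} with hs
  -- step 1: rewrite the product as a double sum
  have expand : (∏ t ∈ Finset.range k,
        (1 - C (qK ^ (a + (t : ℤ))) * (X 0 * X 1)) : R2) =
      ∑ j ∈ Finset.range (k+1), ∑ i ∈ Finset.range (k - j + 1),
        C ((qK^a)^j * (qK^a)^i * qbin k j * qbin (k-j) i * pI a (k-j-i)) *
          (zPoch 0 j * (X 1 ^ j * zPoch 1 i)) := by
    have L1 : (∏ t ∈ Finset.range k, (1 - C (qK ^ (a + (t : ℤ))) * (X 0 * X 1)) : R2) =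
        ∏ t ∈ Finset.range k,
          (1 - algebraMap Kq R2 (qK ^ t) * (X 0 * (C (qK ^ a) * X 1))) := by
      apply Finset.prod_congr rfl
      intro t _
      rw [MvPolynomial.algebraMap_eq]
      have : (qK ^ (a + (t:ℤ)) : Kq) = qK ^ t * qK ^ a := by
        rw [zpow_add₀ qK_ne_zero, zpow_natCast, mul_comm]
      rw [this, map_mul]
      ring
    rw [L1, master k (X 0) (C (qK ^ a) * X 1)]
    apply Finset.sum_congr rfl
    intro j hj
    have L2 : (∏ t ∈ Finset.range (k - j),
          (1 - algebraMap Kq R2 (qK ^ t) * (C (qK ^ a) * X 1))) =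
        ∏ t ∈ Finset.range (k - j),
          (1 - algebraMap Kq R2 (qK ^ t) * (X 1 * C (qK ^ a))) := by
      apply Finset.prod_congr rfl
      intro t _
      ring
    rw [L2, master (k - j) (X 1) (C (qK ^ a)), Finset.mul_sum]
    apply Finset.sum_congr rfl
    intro i hi
    have L3 : (∏ t ∈ Finset.range (k - j - i),
          (1 - algebraMap Kq R2 (qK ^ t) * C (qK ^ a))) = C (pI a (k-j-i)) := by
      rw [pI, map_prod]
      apply Finset.prod_congr rfl
      intro t _
      rw [MvPolynomial.algebraMap_eq, ← map_mul, map_sub, map_one]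
      congr 2
      rw [zpow_add₀ qK_ne_zero, zpow_natCast, mul_comm]
    rw [L3]
    simp only [algC]
    rw [zPoch_def 0 j, zPoch_def 1 i]
    simp only [map_mul, map_pow, mul_pow]
    ring
  -- step 2: membership in the span
  have hmem : (∏ t ∈ Finset.range k,
      (1 - C (qK ^ (a + (t : ℤ))) * (X 0 * X 1)) : R2) ∈
      Submodule.span ↥ZLaurent (v '' s) := by
    rw [expand]
    apply Submodule.sum_mem
    intro j hj
    apply Submodule.sum_mem
    intro i hi
    have hjk : j ≤ k := Nat.lt_succ_iff.mp (Finset.mem_range.mp hj)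
    have hik : i ≤ k - j := Nat.lt_succ_iff.mp (Finset.mem_range.mp hi)
    rw [← mul_assoc]
    apply mul_span_mem (T := {p : R2 | ∃ r, i ≤ r ∧ r ≤ i + j ∧ p = zPoch 1 r})
      _ ?_ (pow_mul_zPoch_mem 1 j i)
    rintro x ⟨r, hir, hrij, rfl⟩
    have hrk : r ≤ k := by omega
    set b₀ : Kq := (qK^a)^j * (qK^a)^i * (qPochK r * (qPochK i)⁻¹) * dv a (k-j-i) with hb₀
    have hbmem : b₀ ∈ ZLaurent :=
      mul_mem (mul_mem (mul_mem (pow_mem (qK_zpow_mem a) j) (pow_mem (qK_zpow_mem a) i))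
        (qPochK_ratio_mem hir)) (dv_mem a (k-j-i))
    have hγ : (qK^a)^j * (qK^a)^i * qbin k j * qbin (k-j) i * pI a (k-j-i) =
        b₀ * (qPochK k * ((qPochK j)⁻¹ * (qPochK r)⁻¹)) := by
      rw [hb₀]
      simp only [qbin, dv]
      have h1 := qPochK_ne_zero k
      have h2 := qPochK_ne_zero j
      have h3 := qPochK_ne_zero i
      have h4 := qPochK_ne_zero r
      have h5 := qPochK_ne_zero (k - j)
      have h6 := qPochK_ne_zero (k - j - i)
      field_simp
    have heq : C ((qK^a)^j * (qK^a)^i * qbin k j * qbin (k-j) i * pI a (k-j-i)) * zPoch 0 j *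
        zPoch 1 r = (⟨b₀, hbmem⟩ : ↥ZLaurent) • v ![j, r] := by
      rw [subring_smul_def, hv]
      simp only [Matrix.cons_val_zero, Matrix.cons_val_one, Matrix.head_cons]
      rw [hγ, map_mul]
      ring
    rw [heq]
    apply Submodule.smul_mem
    apply Submodule.subset_span
    refine ⟨![j, r], ?_, rfl⟩
    rw [hs]
    simp only [Set.mem_setOf_eq, Matrix.cons_val_zero, Matrix.cons_val_one, Matrix.head_cons]
    exact ⟨hjk, hrk⟩
  -- step 3: extract the Finsupp
  obtain ⟨l, hl1, hl2⟩ := (Finsupp.mem_span_image_iff_linearCombination ↥ZLaurent).mp hmem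
  refine ⟨l.mapRange (Subtype.val : ↥ZLaurent → Kq) rfl, ?_, ?_, ?_⟩
  · intro k'
    rw [Finsupp.mapRange_apply]
    exact SetLike.coe_mem _
  · intro k' hk'
    exact (Finsupp.mem_supported _ _).mp hl1 (Finsupp.support_mapRange hk')
  · rw [← hl2, Finsupp.linearCombination_apply]
    rw [Finsupp.sum_mapRange_index (by intro a'; simp)]
    apply Finsupp.sum_congr
    intro k' _
    rw [subring_smul_def, hv, ← mul_assoc, ← map_mul]
end
end
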